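/- Let P₁, …, P_K be finitely many mean-zero distributions on ℝ with bounded support, and for each k let (X_i^{(k)})_{i≥1} be i.i.d. with law P_k, with the K families mutually independent. Then there exists a constant C > 0 such that for all choices of nonnegative integers L₁, …, L_K, P(Σ_{k=1}^K Σ_{i=1}^{L_k} X_i^{(k)} ≥ 0) > C. -/

import Mathlib

open MeasureTheory ProbabilityTheory
open scoped ProbabilityTheory

section aux
variable {Ω : Type*} [MeasureSpace Ω] [IsProbabilityMeasure (ℙ : Measure Ω)]

lemma aux_int {f : Ω → ℝ} (hf : Measurable f) (C : ℝ) (h : ∀ ω, |f ω| ≤ C) :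
    Integrable f ℙ :=
  (memLp_top_of_bound hf.aestronglyMeasurable C
    (Filter.Eventually.of_forall fun ω => by simpa using h ω)).integrable le_top

lemma aux_mem2 {f : Ω → ℝ} (hf : Measurable f) (C : ℝ) (h : ∀ ω, |f ω| ≤ C) :
    MemLp f (ENNReal.ofReal 2) ℙ :=
  MemLp.of_bound hf.aestronglyMeasurable C
    (Filter.Eventually.of_forall fun ω => by simpa using h ω)

lemma aux_cs {f g : Ω → ℝ} (hf : Measurable f) (hg : Measurable g)
    (hf0 : ∀ ω, 0 ≤ f ω) (hg0 : ∀ ω, 0 ≤ g ω) (Cf Cg : ℝ)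
    (hfb : ∀ ω, |f ω| ≤ Cf) (hgb : ∀ ω, |g ω| ≤ Cg) :
    ∫ ω, f ω * g ω ≤ Real.sqrt (∫ ω, f ω ^ 2) * Real.sqrt (∫ ω, g ω ^ 2) := by
  have hconj : Real.HolderConjugate 2 2 := Real.HolderConjugate.two_two
  have := MeasureTheory.integral_mul_le_Lp_mul_Lq_of_nonneg (μ := (ℙ : Measure Ω)) hconj
    (Filter.Eventually.of_forall hf0) (Filter.Eventually.of_forall hg0)
    (aux_mem2 hf Cf hfb) (aux_mem2 hg Cg hgb)
  have h2 : ∀ x : ℝ, x ^ (2:ℝ) = x ^ 2 := fun x => by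
    rw [← Real.rpow_natCast x 2]; norm_num
  simp only [h2] at this
  calc ∫ ω, f ω * g ω ≤ (∫ a, f a ^ 2) ^ (1/2 : ℝ) * (∫ a, g a ^ 2) ^ (1/2 : ℝ) := this
    _ = Real.sqrt (∫ ω, f ω ^ 2) * Real.sqrt (∫ ω, g ω ^ 2) := by
        rw [Real.sqrt_eq_rpow, Real.sqrt_eq_rpow]

lemma aux_moments {ι : Type*} (Y : ι → Ω → ℝ) (hmeas : ∀ i, Measurable (Y i))
    (hindep : iIndepFun Y ℙ) (B : ℝ) (hB : 0 ≤ B)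
    (hbdd : ∀ i ω, |Y i ω| ≤ B) (hmean : ∀ i, (∫ ω, Y i ω) = 0) (s : Finset ι) :
    (∫ ω, (∑ i ∈ s, Y i ω)) = 0 ∧
    (∫ ω, (∑ i ∈ s, Y i ω) ^ 2) = ∑ i ∈ s, ∫ ω, (Y i ω) ^ 2 ∧
    (∫ ω, (∑ i ∈ s, Y i ω) ^ 4) ≤
      3 * (∑ i ∈ s, ∫ ω, (Y i ω) ^ 2) ^ 2 + B ^ 2 * ∑ i ∈ s, ∫ ω, (Y i ω) ^ 2 := by
  classical
  induction s using Finset.induction_on with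
  | empty => simp
  | @insert i s hi ih =>
    obtain ⟨ih0, ih2, ih4⟩ := ih
    set S : Ω → ℝ := fun ω => ∑ j ∈ s, Y j ω with hS
    have hSmeas : Measurable S := by
      apply Finset.measurable_sum; intro j _; exact hmeas j
    have hSbdd : ∀ ω, |S ω| ≤ s.card * B := by
      intro ω
      calc |S ω| ≤ ∑ j ∈ s, |Y j ω| := Finset.abs_sum_le_sum_abs _ _
        _ ≤ ∑ j ∈ s, B := Finset.sum_le_sum fun j _ => hbdd j ω
        _ = s.card * B := by rw [Finset.sum_const, nsmul_eq_mul]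
    -- independence of S and Y i
    have hST : IndepFun S (Y i) ℙ := by
      have := hindep.indepFun_finset_sum_of_notMem hmeas hi
      have he : (∑ j ∈ s, Y j) = S := by ext ω; simp [hS]
      rwa [he] at this
    -- bounded powers are integrable
    have hintS : ∀ a : ℕ, Integrable (fun ω => S ω ^ a) ℙ := fun a =>
      aux_int (hSmeas.pow_const a) ((s.card * B) ^ a) (fun ω => by
        rw [abs_pow]; exact pow_le_pow_left₀ (abs_nonneg _) (hSbdd ω) a)
    have hintY : ∀ a : ℕ, Integrable (fun ω => Y i ω ^ a) ℙ := fun a =>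
      aux_int ((hmeas i).pow_const a) (B ^ a) (fun ω => by
        rw [abs_pow]; exact pow_le_pow_left₀ (abs_nonneg _) (hbdd i ω) a)
    -- product formula for moments
    have hmul : ∀ a b : ℕ, (∫ ω, S ω ^ a * Y i ω ^ b)
        = (∫ ω, S ω ^ a) * ∫ ω, Y i ω ^ b := by
      intro a b
      have h1 : IndepFun (fun ω => S ω ^ a) (fun ω => Y i ω ^ b) ℙ :=
        hST.comp (measurable_id.pow_const a) (measurable_id.pow_const b)
      exact h1.integral_mul_eq_mul_integral (hintS a).aestronglyMeasurable (hintY b).aestronglyMeasurable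
    have hEY : (∫ ω, Y i ω) = 0 := hmean i
    have hES : (∫ ω, S ω) = 0 := ih0
    have hsum : ∀ ω, (∑ j ∈ insert i s, Y j ω) = S ω + Y i ω := by
      intro ω; rw [Finset.sum_insert hi]; ring
    have hmul10 : (∫ ω, S ω ^ 3 * Y i ω) = 0 := by
      have := hmul 3 1; simp only [pow_one] at this; rw [this, hEY, mul_zero]
    have hmul01 : (∫ ω, S ω * Y i ω ^ 3) = 0 := by
      have := hmul 1 3; simp only [pow_one] at this; rw [this, hES, zero_mul]
    have hmul11 : (∫ ω, S ω * Y i ω) = 0 := by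
      have := hmul 1 1; simp only [pow_one] at this; rw [this, hES, zero_mul]
    have hmul22 : (∫ ω, S ω ^ 2 * Y i ω ^ 2) = (∫ ω, S ω ^ 2) * ∫ ω, Y i ω ^ 2 :=
      hmul 2 2
    have hintSY : ∀ a b : ℕ, Integrable (fun ω => S ω ^ a * Y i ω ^ b) ℙ := by
      intro a b
      refine aux_int ((hSmeas.pow_const a).mul ((hmeas i).pow_const b))
        ((s.card * B) ^ a * B ^ b) (fun ω => ?_)
      rw [abs_mul, abs_pow, abs_pow]
      exact mul_le_mul (pow_le_pow_left₀ (abs_nonneg _) (hSbdd ω) a)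
        (pow_le_pow_left₀ (abs_nonneg _) (hbdd i ω) b)
        (pow_nonneg (abs_nonneg _) b) (pow_nonneg (by positivity) a)
    have hS1 : Integrable S ℙ := by simpa using hintS 1
    have hY1 : Integrable (Y i) ℙ := by simpa using hintY 1
    have hSY11 : Integrable (fun ω => S ω * Y i ω) ℙ := by simpa using hintSY 1 1
    have hSY31 : Integrable (fun ω => S ω ^ 3 * Y i ω) ℙ := by simpa using hintSY 3 1
    have hSY13 : Integrable (fun ω => S ω * Y i ω ^ 3) ℙ := by simpa using hintSY 1 3
    have hSY22 : Integrable (fun ω => S ω ^ 2 * Y i ω ^ 2) ℙ := hintSY 2 2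
    have hτ0 : 0 ≤ ∫ ω, Y i ω ^ 2 := integral_nonneg fun ω => sq_nonneg _
    have hV0 : 0 ≤ ∑ j ∈ s, ∫ ω, Y j ω ^ 2 :=
      Finset.sum_nonneg fun j _ => integral_nonneg fun ω => sq_nonneg _
    have hY4le : (∫ ω, Y i ω ^ 4) ≤ B ^ 2 * ∫ ω, Y i ω ^ 2 := by
      rw [show B ^ 2 * ∫ ω, Y i ω ^ 2 = ∫ ω, B ^ 2 * Y i ω ^ 2 from
        (integral_const_mul _ _).symm]
      refine integral_mono (hintY 4) ((hintY 2).const_mul _) (fun ω => ?_)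
      have h1 : Y i ω ^ 2 ≤ B ^ 2 := by
        rw [← sq_abs]; exact pow_le_pow_left₀ (abs_nonneg _) (hbdd i ω) 2
      nlinarith [sq_nonneg (Y i ω)]
    refine ⟨?_, ?_, ?_⟩
    · simp only [hsum]
      rw [integral_add hS1 hY1, hES, hEY, add_zero]
    · simp only [hsum, Finset.sum_insert hi]
      have hpt : ∀ ω, (S ω + Y i ω) ^ 2
          = S ω ^ 2 + (2 * (S ω * Y i ω) + Y i ω ^ 2) := fun ω => by ring
      simp_rw [hpt]
      have i2b : Integrable (fun ω => 2 * (S ω * Y i ω) + Y i ω ^ 2) ℙ :=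
        (hSY11.const_mul 2).add (hintY 2)
      rw [integral_add (hintS 2) i2b, integral_add (hSY11.const_mul 2) (hintY 2),
        integral_const_mul, hmul11, ih2]
      ring
    · simp only [hsum, Finset.sum_insert hi]
      have hpt : ∀ ω, (S ω + Y i ω) ^ 4
          = S ω ^ 4 + (4 * (S ω ^ 3 * Y i ω) + (6 * (S ω ^ 2 * Y i ω ^ 2)
            + (4 * (S ω * Y i ω ^ 3) + Y i ω ^ 4))) := fun ω => by ring
      simp_rw [hpt]
      have i3 : Integrable (fun ω => 4 * (S ω * Y i ω ^ 3) + Y i ω ^ 4) ℙ :=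
        (hSY13.const_mul 4).add (hintY 4)
      have i2 : Integrable (fun ω => 6 * (S ω ^ 2 * Y i ω ^ 2)
          + (4 * (S ω * Y i ω ^ 3) + Y i ω ^ 4)) ℙ := (hSY22.const_mul 6).add i3
      have i1 : Integrable (fun ω => 4 * (S ω ^ 3 * Y i ω) + (6 * (S ω ^ 2 * Y i ω ^ 2)
          + (4 * (S ω * Y i ω ^ 3) + Y i ω ^ 4))) ℙ := (hSY31.const_mul 4).add i2
      rw [integral_add (hintS 4) i1, integral_add (hSY31.const_mul 4) i2,
        integral_add (hSY22.const_mul 6) i3, integral_add (hSY13.const_mul 4) (hintY 4),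
        integral_const_mul, integral_const_mul, integral_const_mul,
        hmul10, hmul01, hmul22, ih2]
      nlinarith [hY4le, hτ0, hV0, ih4,
        mul_nonneg hV0 hτ0, sq_nonneg (∑ j ∈ s, ∫ ω, Y j ω ^ 2)]

lemma aux_pz {S : Ω → ℝ} (hS : Measurable S) (M : ℝ) (hM : 0 ≤ M)
    (hbd : ∀ ω, |S ω| ≤ M) (h0 : (∫ ω, S ω) = 0) {A : ℝ}
    (h4 : (∫ ω, S ω ^ 4) ≤ A) (hV : 0 < ∫ ω, S ω ^ 2) :
    (∫ ω, S ω ^ 2) ^ 2 / (4 * A) ≤ (ℙ {ω | 0 ≤ S ω}).toReal := by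
  set a := ∫ ω, |S ω| with ha_def
  set b := ∫ ω, S ω ^ 2 with hb_def
  set c := ∫ ω, |S ω| ^ 3 with hc_def
  set d := ∫ ω, S ω ^ 4 with hd_def
  have hAset : MeasurableSet {ω | 0 ≤ S ω} := measurableSet_le measurable_const hS
  set P := (ℙ {ω | 0 ≤ S ω}).toReal with hP_def
  clear_value P
  have hP0 : 0 ≤ P := hP_def ▸ ENNReal.toReal_nonneg
  have ha0 : 0 ≤ a := integral_nonneg fun ω => abs_nonneg _
  have hb0 : 0 ≤ b := le_of_lt hV
  have hc0 : 0 ≤ c := integral_nonneg fun ω => pow_nonneg (abs_nonneg _) 3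
  have hd0 : 0 ≤ d := integral_nonneg fun ω => by positivity
  -- Step 1 : b ≤ √a √c
  have step1 : b ≤ Real.sqrt a * Real.sqrt c := by
    have h := aux_cs (f := fun ω => Real.sqrt |S ω|)
      (g := fun ω => |S ω| * Real.sqrt |S ω|)
      (hS.abs.sqrt) (hS.abs.mul hS.abs.sqrt)
      (fun ω => Real.sqrt_nonneg _)
      (fun ω => mul_nonneg (abs_nonneg _) (Real.sqrt_nonneg _))
      (Real.sqrt M) (M * Real.sqrt M)
      (fun ω => by
        rw [abs_of_nonneg (Real.sqrt_nonneg _)]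
        exact Real.sqrt_le_sqrt (hbd ω))
      (fun ω => by
        rw [abs_of_nonneg (mul_nonneg (abs_nonneg _) (Real.sqrt_nonneg _))]
        exact mul_le_mul (hbd ω) (Real.sqrt_le_sqrt (hbd ω))
          (Real.sqrt_nonneg _) hM)
    have e1 : ∀ ω, Real.sqrt |S ω| * (|S ω| * Real.sqrt |S ω|) = S ω ^ 2 := fun ω => by
      rw [show Real.sqrt |S ω| * (|S ω| * Real.sqrt |S ω|)
          = |S ω| * (Real.sqrt |S ω| * Real.sqrt |S ω|) from by ring,
        Real.mul_self_sqrt (abs_nonneg _), ← sq_abs]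
      ring
    have e2 : ∀ ω, (Real.sqrt |S ω|) ^ 2 = |S ω| := fun ω =>
      Real.sq_sqrt (abs_nonneg _)
    have e3 : ∀ ω, (|S ω| * Real.sqrt |S ω|) ^ 2 = |S ω| ^ 3 := fun ω => by
      rw [mul_pow, Real.sq_sqrt (abs_nonneg _)]; ring
    simp only [e1, e2, e3] at h
    exact h
  -- Step 2 : c ≤ √b √d
  have step2 : c ≤ Real.sqrt b * Real.sqrt d := by
    have h := aux_cs (f := fun ω => |S ω|) (g := fun ω => S ω ^ 2)
      hS.abs (hS.pow_const 2)
      (fun ω => abs_nonneg _) (fun ω => sq_nonneg _)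
      M (M ^ 2)
      (fun ω => by rw [abs_abs]; exact hbd ω)
      (fun ω => by
        rw [abs_of_nonneg (sq_nonneg _)]
        calc S ω ^ 2 = |S ω| ^ 2 := (sq_abs _).symm
          _ ≤ M ^ 2 := pow_le_pow_left₀ (abs_nonneg _) (hbd ω) 2)
    have e1 : ∀ ω, |S ω| * S ω ^ 2 = |S ω| ^ 3 := fun ω => by
      rw [← sq_abs]; ring
    have e2 : ∀ ω, |S ω| ^ 2 = S ω ^ 2 := fun ω => sq_abs _
    have e3 : ∀ ω, (S ω ^ 2) ^ 2 = S ω ^ 4 := fun ω => by ring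
    simp only [e1, e2, e3] at h
    exact h
  -- Step 3 : a ≤ 2 √b √P
  have step3 : a ≤ 2 * (Real.sqrt b * Real.sqrt P) := by
    set g : Ω → ℝ := Set.indicator {ω | 0 ≤ S ω} (fun _ => (1:ℝ)) with hg_def
    have hgmeas : Measurable g := measurable_const.indicator hAset
    have hg01 : ∀ ω, 0 ≤ g ω ∧ g ω ≤ 1 := fun ω => by
      by_cases h : ω ∈ {ω | 0 ≤ S ω} <;> simp [hg_def, Set.indicator, h]
    have hintmax : Integrable (fun ω => max (S ω) 0) ℙ :=
      aux_int (hS.max measurable_const) M (fun ω => by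
        rw [abs_of_nonneg (le_max_right _ _)]
        rcases le_or_gt (S ω) 0 with h | h
        · simpa [max_eq_right h] using hM
        · rw [max_eq_left h.le]; exact (le_abs_self _).trans (hbd ω))
    have hintS1 : Integrable S ℙ := aux_int hS M hbd
    have hintabs : Integrable (fun ω => |S ω|) ℙ := hintS1.abs
    -- a = 2 ∫ max S 0
    have hmaxid : ∀ ω, |S ω| = 2 * max (S ω) 0 - S ω := fun ω => by
      rcases le_or_gt 0 (S ω) with h | h
      · rw [abs_of_nonneg h, max_eq_left h]; ring
      · rw [abs_of_neg h, max_eq_right h.le]; ring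
    have ha2 : a = 2 * ∫ ω, max (S ω) 0 := by
      rw [ha_def]
      simp_rw [hmaxid]
      rw [integral_sub (hintmax.const_mul 2) hintS1, integral_const_mul, h0, sub_zero]
    -- ∫ max S 0 ≤ ∫ |S| g ≤ √b √P
    have hintabsg : Integrable (fun ω => |S ω| * g ω) ℙ :=
      aux_int (hS.abs.mul hgmeas) M (fun ω => by
        rw [abs_mul, abs_abs, abs_of_nonneg (hg01 ω).1]
        calc |S ω| * g ω ≤ M * 1 :=
            mul_le_mul (hbd ω) (hg01 ω).2 (hg01 ω).1 hM
          _ = M := mul_one M)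
    have hmono : (∫ ω, max (S ω) 0) ≤ ∫ ω, |S ω| * g ω := by
      refine integral_mono hintmax hintabsg (fun ω => ?_)
      by_cases h : ω ∈ {ω | 0 ≤ S ω}
      · have h' : 0 ≤ S ω := h
        simp only [hg_def, Set.indicator_of_mem h, mul_one]
        rw [max_eq_left h']; exact le_abs_self _
      · have h' : S ω < 0 := not_le.mp h
        simp only [hg_def, Set.indicator_of_notMem h, mul_zero]
        rw [max_eq_right h'.le]
    have hcs3 : (∫ ω, |S ω| * g ω) ≤ Real.sqrt b * Real.sqrt P := by
      have h := aux_cs (f := fun ω => |S ω|) (g := g)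
        hS.abs hgmeas (fun ω => abs_nonneg _) (fun ω => (hg01 ω).1)
        M 1
        (fun ω => by rw [abs_abs]; exact hbd ω)
        (fun ω => by rw [abs_of_nonneg (hg01 ω).1]; exact (hg01 ω).2)
      have e2 : ∀ ω, |S ω| ^ 2 = S ω ^ 2 := fun ω => sq_abs _
      have e3 : ∀ ω, g ω ^ 2 = g ω := fun ω => by
        by_cases h : ω ∈ {ω | 0 ≤ S ω} <;> simp [hg_def, Set.indicator, h]
      simp only [e2, e3] at h
      have hgint : (∫ ω, g ω) = P := by
        rw [hg_def, hP_def, integral_indicator_const (1:ℝ) hAset, smul_eq_mul, mul_one, measureReal_def]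
      rwa [hgint] at h
    calc a = 2 * ∫ ω, max (S ω) 0 := ha2
      _ ≤ 2 * ∫ ω, |S ω| * g ω := by linarith [hmono]
      _ ≤ 2 * (Real.sqrt b * Real.sqrt P) := by linarith [hcs3]
  -- numeric conclusion
  have hac : (Real.sqrt a * Real.sqrt c) ^ 2 = a * c := by
    rw [mul_pow, Real.sq_sqrt ha0, Real.sq_sqrt hc0]
  have hbd' : (Real.sqrt b * Real.sqrt d) ^ 2 = b * d := by
    rw [mul_pow, Real.sq_sqrt hb0, Real.sq_sqrt hd0]
  have hbp : (2 * (Real.sqrt b * Real.sqrt P)) ^ 2 = 4 * (b * P) := by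
    rw [mul_pow, mul_pow, Real.sq_sqrt hb0, Real.sq_sqrt hP0]; ring
  have s1 : b ^ 2 ≤ a * c := by
    have := pow_le_pow_left₀ hb0 step1 2; rwa [hac] at this
  have s2 : c ^ 2 ≤ b * d := by
    have := pow_le_pow_left₀ hc0 step2 2; rwa [hbd'] at this
  have s3 : a ^ 2 ≤ 4 * (b * P) := by
    have := pow_le_pow_left₀ ha0 step3 2; rwa [hbp] at this
  have t1 : b ^ 4 ≤ (a * c) ^ 2 := by
    calc b ^ 4 = (b ^ 2) ^ 2 := by ring
      _ ≤ (a * c) ^ 2 := pow_le_pow_left₀ (sq_nonneg _) s1 2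
  have t3 : a ^ 2 * c ^ 2 ≤ (4 * (b * P)) * (b * d) :=
    mul_le_mul s3 s2 (sq_nonneg c) (by positivity)
  have t1' : b ^ 4 ≤ a ^ 2 * c ^ 2 := by
    have e : (a * c) ^ 2 = a ^ 2 * c ^ 2 := by ring
    linarith [t1, e.le, e.ge]
  have t4 : b ^ 2 * b ^ 2 ≤ (4 * P * d) * b ^ 2 := by
    have e : (4 * (b * P)) * (b * d) = (4 * P * d) * b ^ 2 := by ring
    have e2 : b ^ 4 = b ^ 2 * b ^ 2 := by ring
    linarith [t1', t3, e.le, e.ge, e2.le, e2.ge]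
  have t5 : b ^ 2 ≤ 4 * P * d := le_of_mul_le_mul_right t4 (pow_pos hV 2)
  have t6 : b ^ 2 ≤ 4 * P * A := by
    have h' : 4 * P * d ≤ 4 * P * A :=
      mul_le_mul_of_nonneg_left h4 (by linarith [hP0])
    linarith [t5]
  have hApos : 0 < A := by
    by_contra hA
    push_neg at hA
    have h1 : 4 * P * A ≤ 0 := mul_nonpos_of_nonneg_of_nonpos (by linarith [hP0]) hA
    have h2 : (0:ℝ) < b ^ 2 := pow_pos hV 2
    linarith
  rw [div_le_iff₀ (by positivity)]
  linarith [t6]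

end aux

/-- Lemma: K families of i.i.d. mean-zero bounded random variables,
mutually independent, admit a uniform constant C > 0 such that for all choices
of numbers of summands L₁,…,L_K, the probability that the total sum is
nonnegative exceeds C. -/
theorem families_partial_sum_nonneg_prob_bounded_below
    {Ω : Type*} [MeasureSpace Ω] [IsProbabilityMeasure (ℙ : Measure Ω)]
    (K : ℕ) (hK : 0 < K)
    (X : Fin K → ℕ → Ω → ℝ)
    (hmeas : ∀ k i, Measurable (X k i))
    (hindep : iIndepFun
      (fun p : Fin K × ℕ => X p.1 p.2) ℙ)
    (hident : ∀ k i, Measure.map (X k i) ℙ = Measure.map (X k 0) ℙ)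
    (B : ℝ) (hbdd : ∀ k i ω, |X k i ω| ≤ B)
    (hmean : ∀ k, (∫ ω, X k 0 ω) = 0) :
    ∃ C > (0 : ℝ), ∀ L : Fin K → ℕ,
      C < (ℙ {ω | 0 ≤ ∑ k : Fin K, ∑ i ∈ Finset.range (L k), X k i ω}).toReal := by
  classical
  set B' := max B 0 with hB'def
  have hB'0 : (0:ℝ) ≤ B' := le_max_right _ _
  have hbdd' : ∀ k i ω, |X k i ω| ≤ B' := fun k i ω => (hbdd k i ω).trans (le_max_left _ _)
  -- identical distribution facts
  have hmean' : ∀ k i, (∫ ω, X k i ω) = 0 := by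
    intro k i
    have h1 : (∫ ω, X k i ω) = ∫ x, x ∂(Measure.map (X k i) ℙ) :=
      (integral_map (hmeas k i).aemeasurable aestronglyMeasurable_id).symm
    have h2 : (∫ ω, X k 0 ω) = ∫ x, x ∂(Measure.map (X k 0) ℙ) :=
      (integral_map (hmeas k 0).aemeasurable aestronglyMeasurable_id).symm
    rw [h1, hident k i, ← h2, hmean k]
  set v : Fin K → ℝ := fun k => ∫ ω, (X k 0 ω) ^ 2 with hvdef
  have hm2 : ∀ k i, (∫ ω, (X k i ω) ^ 2) = v k := by
    intro k i
    have hx2 : AEStronglyMeasurable (fun x : ℝ => x ^ 2)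
        (Measure.map (X k i) ℙ) := (measurable_id.pow_const 2).aestronglyMeasurable
    have hx2' : AEStronglyMeasurable (fun x : ℝ => x ^ 2)
        (Measure.map (X k 0) ℙ) := (measurable_id.pow_const 2).aestronglyMeasurable
    have h1 : (∫ ω, (X k i ω) ^ 2) = ∫ x, x ^ 2 ∂(Measure.map (X k i) ℙ) :=
      (integral_map (hmeas k i).aemeasurable hx2).symm
    have h2 : (∫ ω, (X k 0 ω) ^ 2) = ∫ x, x ^ 2 ∂(Measure.map (X k 0) ℙ) :=
      (integral_map (hmeas k 0).aemeasurable hx2').symm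
    rw [h1, hident k i, ← h2, hvdef]
  have hv0 : ∀ k, 0 ≤ v k := fun k => integral_nonneg fun ω => sq_nonneg _
  -- the general finset machinery
  have hmeasY : ∀ p : Fin K × ℕ, Measurable (X p.1 p.2) := fun p => hmeas p.1 p.2
  -- main case analysis on whether some variance is positive
  set KP : Finset (Fin K) := Finset.univ.filter (fun k => 0 < v k) with hKPdef
  -- generic facts for a given L
  have key : ∀ L : Fin K → ℕ,
      ((∑ k : Fin K, (L k : ℝ) * v k) = 0 →
        (ℙ {ω | 0 ≤ ∑ k : Fin K, ∑ i ∈ Finset.range (L k), X k i ω}).toReal = 1) ∧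
      (0 < (∑ k : Fin K, (L k : ℝ) * v k) →
        (∑ k : Fin K, (L k : ℝ) * v k) ^ 2
            / (4 * (3 * (∑ k : Fin K, (L k : ℝ) * v k) ^ 2
              + B' ^ 2 * (∑ k : Fin K, (L k : ℝ) * v k)))
          ≤ (ℙ {ω | 0 ≤ ∑ k : Fin K, ∑ i ∈ Finset.range (L k), X k i ω}).toReal) := by
    intro L
    set sL : Finset (Fin K × ℕ) :=
      Finset.univ.biUnion (fun k => (Finset.range (L k)).image (fun i => (k, i))) with hsLdef
    have hdisj : (↑(Finset.univ : Finset (Fin K)) : Set (Fin K)).PairwiseDisjoint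
        (fun k => (Finset.range (L k)).image (fun i => (k, i))) := by
      intro k1 _ k2 _ hne
      simp only [Finset.disjoint_left, Finset.mem_image]
      rintro p ⟨i, _, rfl⟩ ⟨j, _, hj⟩
      exact hne (congrArg Prod.fst hj).symm
    have hsum_eq : ∀ (f : Fin K → ℕ → ℝ),
        (∑ p ∈ sL, f p.1 p.2) = ∑ k : Fin K, ∑ i ∈ Finset.range (L k), f k i := by
      intro f
      rw [hsLdef, Finset.sum_biUnion hdisj]
      refine Finset.sum_congr rfl fun k _ => ?_
      rw [Finset.sum_image]
      intro i _ j _ h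
      exact (Prod.mk.injEq _ _ _ _).mp h |>.2
    have hS_eq : ∀ ω, (∑ p ∈ sL, X p.1 p.2 ω)
        = ∑ k : Fin K, ∑ i ∈ Finset.range (L k), X k i ω := fun ω =>
      hsum_eq (fun k i => X k i ω)
    have hV_eq : (∑ p ∈ sL, ∫ ω, (X p.1 p.2 ω) ^ 2) = ∑ k : Fin K, (L k : ℝ) * v k := by
      rw [hsum_eq (fun k i => ∫ ω, (X k i ω) ^ 2)]
      refine Finset.sum_congr rfl fun k _ => ?_
      simp [hm2 k, mul_comm]
    obtain ⟨h0, h2, h4⟩ := aux_moments (fun p : Fin K × ℕ => X p.1 p.2) hmeasY hindep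
      B' hB'0 (fun p ω => hbdd' p.1 p.2 ω) (fun p => hmean' p.1 p.2) sL
    rw [hV_eq] at h2 h4
    set V := ∑ k : Fin K, (L k : ℝ) * v k with hVdef
    set S : Ω → ℝ := fun ω => ∑ p ∈ sL, X p.1 p.2 ω with hSdef
    have hSmeas : Measurable S := by
      apply Finset.measurable_sum; intro p _; exact hmeasY p
    have hSbdd : ∀ ω, |S ω| ≤ sL.card * B' := by
      intro ω
      calc |S ω| ≤ ∑ p ∈ sL, |X p.1 p.2 ω| := Finset.abs_sum_le_sum_abs _ _
        _ ≤ ∑ p ∈ sL, B' := Finset.sum_le_sum fun p _ => hbdd' p.1 p.2 ω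
        _ = sL.card * B' := by rw [Finset.sum_const, nsmul_eq_mul]
    have hset : {ω | 0 ≤ ∑ k : Fin K, ∑ i ∈ Finset.range (L k), X k i ω}
        = {ω | 0 ≤ S ω} := by
      ext ω; simp only [Set.mem_setOf_eq, hSdef, hS_eq ω]
    constructor
    · intro hV0
      rw [hset]
      have h2' : (∫ ω, S ω ^ 2) = 0 := by rw [h2]; exact hV0
      have hint2 : Integrable (fun ω => S ω ^ 2) ℙ :=
        aux_int (hSmeas.pow_const 2) ((sL.card * B') ^ 2) (fun ω => by
          rw [abs_pow]; exact pow_le_pow_left₀ (abs_nonneg _) (hSbdd ω) 2)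
      have hae : ∀ᵐ ω ∂(ℙ : Measure Ω), S ω = 0 := by
        have := (integral_eq_zero_iff_of_nonneg (fun ω => sq_nonneg (S ω)) hint2).mp h2'
        filter_upwards [this] with ω hω
        exact (pow_eq_zero_iff two_ne_zero).mp hω
      have hcompl : (ℙ : Measure Ω) {ω | 0 ≤ S ω}ᶜ = 0 := by
        refine measure_mono_null (fun ω hω => ?_) (ae_iff.mp hae)
        intro h
        exact hω (h ▸ le_refl (0:ℝ))
      have hone : (ℙ : Measure Ω) {ω | 0 ≤ S ω} = 1 :=
        (prob_compl_eq_zero_iff (measurableSet_le measurable_const hSmeas)).mp hcompl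
      rw [hone, ENNReal.toReal_one]
    · intro hVpos
      rw [hset]
      have hVs : 0 < ∫ ω, S ω ^ 2 := by rw [h2]; exact hVpos
      have := aux_pz hSmeas (sL.card * B') (mul_nonneg (Nat.cast_nonneg _) hB'0) hSbdd h0
        (A := 3 * V ^ 2 + B' ^ 2 * V) h4 hVs
      rwa [h2] at this
  -- now define the constant
  by_cases hKP : KP.Nonempty
  · obtain ⟨k0, hk0KP, hk0min⟩ := Finset.exists_min_image KP v hKP
    set vmin := v k0 with hvmin
    have hvminpos : 0 < vmin := (Finset.mem_filter.mp hk0KP).2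
    have hden : 0 < 12 * vmin + 4 * B' ^ 2 := by positivity
    set c0 := vmin / (12 * vmin + 4 * B' ^ 2) with hc0
    have hc0pos : 0 < c0 := by positivity
    have hc0lt : c0 < 1 := by
      rw [hc0, div_lt_one hden]; nlinarith [hvminpos, sq_nonneg B']
    refine ⟨c0 / 2, by positivity, fun L => ?_⟩
    set V := ∑ k : Fin K, (L k : ℝ) * v k with hVdef
    have hV0 : 0 ≤ V := Finset.sum_nonneg fun k _ =>
      mul_nonneg (Nat.cast_nonneg _) (hv0 k)
    rcases eq_or_lt_of_le hV0 with hVz | hVpos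
    · have h1 := (key L).1 hVz.symm
      rw [h1]; linarith [hc0pos, hc0lt]
    · have h2 := (key L).2 hVpos
      -- vmin ≤ V
      have hvminleV : vmin ≤ V := by
        obtain ⟨k, hk, hkpos⟩ : ∃ k ∈ (Finset.univ : Finset (Fin K)),
            0 < (L k : ℝ) * v k := by
          by_contra h
          push_neg at h
          have : V ≤ 0 := Finset.sum_nonpos fun k hk => (h k hk)
          linarith
        have hvk : 0 < v k := by
          rcases le_or_gt (v k) 0 with h | h
          · exfalso; nlinarith [Nat.cast_nonneg (α := ℝ) (L k)]
          · exact h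
        have hLk : (1:ℝ) ≤ (L k : ℝ) := by
          have : (L k : ℝ) ≠ 0 := by
            intro h; rw [h, zero_mul] at hkpos; exact lt_irrefl _ hkpos
          have h0 : 0 < L k := Nat.pos_of_ne_zero (by exact_mod_cast this)
          exact_mod_cast h0
        have hkKP : k ∈ KP := Finset.mem_filter.mpr ⟨Finset.mem_univ _, hvk⟩
        calc vmin ≤ v k := hk0min k hkKP
          _ = 1 * v k := (one_mul _).symm
          _ ≤ (L k : ℝ) * v k := mul_le_mul_of_nonneg_right hLk (hv0 k)
          _ ≤ V := Finset.single_le_sum (f := fun k => (L k : ℝ) * v k)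
              (fun k _ => mul_nonneg (Nat.cast_nonneg _) (hv0 k)) hk
      have hdenV : 0 < 12 * V + 4 * B' ^ 2 := by positivity
      have hmono : c0 ≤ V / (12 * V + 4 * B' ^ 2) := by
        rw [hc0, div_le_div_iff₀ hden hdenV]
        nlinarith [hvminleV, sq_nonneg B', hvminpos]
      have heq : V / (12 * V + 4 * B' ^ 2)
          = V ^ 2 / (4 * (3 * V ^ 2 + B' ^ 2 * V)) := by
        have h1 : (0:ℝ) < 4 * (3 * V ^ 2 + B' ^ 2 * V) := by positivity
        rw [div_eq_div_iff hdenV.ne' h1.ne']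
        ring
      calc c0 / 2 < c0 := half_lt_self hc0pos
        _ ≤ V / (12 * V + 4 * B' ^ 2) := hmono
        _ = V ^ 2 / (4 * (3 * V ^ 2 + B' ^ 2 * V)) := heq
        _ ≤ _ := h2
  · -- all variances vanish
    refine ⟨1/2, by norm_num, fun L => ?_⟩
    have hzero : ∀ k, v k = 0 := by
      intro k
      by_contra h
      have : 0 < v k := lt_of_le_of_ne (hv0 k) (Ne.symm h)
      exact hKP ⟨k, Finset.mem_filter.mpr ⟨Finset.mem_univ _, this⟩⟩
    have hVz : (∑ k : Fin K, (L k : ℝ) * v k) = 0 := by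
      simp [hzero]
    rw [(key L).1 hVz]
    norm_num
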